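/- The boundary value problem u'''(t) = -e^{u(t)} on (0,1) with u(0)=u'(0)=u'(1)=0 has a unique solution u satisfying 0 ≤ u(t) ≤ 1.1/12, 0 ≤ u'(t) ≤ 1.1/8, |u''(t)| ≤ 1.1/2; in particular u is nonnegative and nondecreasing on [0,1]. -/

import Mathlib

/-- `u` solves `u''' = -exp u` on `(0,1)` with `u(0)=u'(0)=u'(1)=0`. -/
def IsSolution (u : ℝ → ℝ) : Prop :=
  ContDiff ℝ 2 u ∧
  (∀ t ∈ Set.Ioo (0:ℝ) 1,
    HasDerivAt (deriv (deriv u)) (-Real.exp (u t)) t) ∧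
  u 0 = 0 ∧ deriv u 0 = 0 ∧ deriv u 1 = 0

/-- bounds of the example. -/
def InBounds (u : ℝ → ℝ) : Prop :=
  ∀ t ∈ Set.Icc (0:ℝ) 1,
    u t ∈ Set.Icc 0 ((1.1 : ℝ) / 12) ∧ deriv u t ∈ Set.Icc 0 ((1.1 : ℝ) / 8) ∧ |deriv (deriv u) t| ≤ (1.1 : ℝ) / 2

open intervalIntegral Set NNReal ENNReal

noncomputable def F0 (f : ℝ → ℝ) (t : ℝ) : ℝ := ∫ s in (0:ℝ)..t, f s
noncomputable def F1 (f : ℝ → ℝ) (t : ℝ) : ℝ := ∫ s in (0:ℝ)..t, s * f s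
noncomputable def F2 (f : ℝ → ℝ) (t : ℝ) : ℝ := ∫ s in (0:ℝ)..t, s^2 * f s
noncomputable def W (a : ℝ) (f : ℝ → ℝ) (t : ℝ) : ℝ :=
  a*t^2/2 - (t^2/2 * F0 f t - t * F1 f t + F2 f t / 2)
noncomputable def W1 (a : ℝ) (f : ℝ → ℝ) (t : ℝ) : ℝ := a*t - (t * F0 f t - F1 f t)
noncomputable def W2 (a : ℝ) (f : ℝ → ℝ) (t : ℝ) : ℝ := a - F0 f t

variable {f : ℝ → ℝ} {a t : ℝ}

theorem hF0 (hf : Continuous f) : HasDerivAt (F0 f) (f t) t :=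
  integral_hasDerivAt_right (hf.intervalIntegrable _ _)
    (hf.stronglyMeasurableAtFilter _ _) hf.continuousAt

theorem hF1 (hf : Continuous f) : HasDerivAt (F1 f) (t * f t) t :=
  integral_hasDerivAt_right ((continuous_id.mul hf).intervalIntegrable _ _)
    ((continuous_id.mul hf).stronglyMeasurableAtFilter _ _) (continuous_id.mul hf).continuousAt

theorem hF2 (hf : Continuous f) : HasDerivAt (F2 f) (t^2 * f t) t :=
  integral_hasDerivAt_right (((continuous_pow 2).mul hf).intervalIntegrable _ _)
    (((continuous_pow 2).mul hf).stronglyMeasurableAtFilter _ _) ((continuous_pow 2).mul hf).continuousAt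

theorem hW (hf : Continuous f) : HasDerivAt (W a f) (W1 a f t) t := by
  have h := ((((hasDerivAt_pow 2 t).const_mul a).div_const 2).sub
      (((((hasDerivAt_pow 2 t).div_const 2).mul (hF0 hf)).sub
        ((hasDerivAt_id t).mul (hF1 hf))).add ((hF2 hf).div_const 2)))
  have h2 : HasDerivAt (W a f) _ t := h
  convert h2 using 1
  unfold W1; simp; ring

theorem hW1 (hf : Continuous f) : HasDerivAt (W1 a f) (W2 a f t) t := by
  have h : HasDerivAt (W1 a f) (a * 1 - ((1 * F0 f t + t * f t) - t * f t)) t := by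
    unfold W1
    exact ((hasDerivAt_id t).const_mul a).sub (((hasDerivAt_id t).mul (hF0 hf)).sub (hF1 hf))
  convert h using 1
  unfold W2; ring

theorem hW2 (hf : Continuous f) : HasDerivAt (W2 a f) (-f t) t := by
  have h := (hasDerivAt_const t a).sub (hF0 hf)
  have h2 : HasDerivAt (W2 a f) _ t := h
  convert h2 using 1; ring

theorem W_zero : W a f 0 = 0 := by unfold W F0 F1 F2; simp
theorem W1_zero : W1 a f 0 = 0 := by unfold W1 F0 F1; simp

theorem derivW (hf : Continuous f) : deriv (W a f) = W1 a f :=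
  funext fun t => (hW hf).deriv
theorem derivW1 (hf : Continuous f) : deriv (W1 a f) = W2 a f :=
  funext fun t => (hW1 hf).deriv

theorem contDiffW (hf : Continuous f) : ContDiff ℝ 2 (W a f) := by
  rw [show (2 : WithTop ℕ∞) = 1 + 1 from rfl, contDiff_succ_iff_deriv]
  refine ⟨fun t => (hW hf).differentiableAt, by simp, ?_⟩
  rw [derivW hf, contDiff_one_iff_deriv]
  exact ⟨fun t => (hW1 hf).differentiableAt,
    (derivW1 hf) ▸ continuous_iff_continuousAt.2 fun t => (hW2 hf).continuousAt⟩

noncomputable def A (f : ℝ → ℝ) : ℝ := ∫ s in (0:ℝ)..1, (1-s) * f s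

variable {f : ℝ → ℝ} {a t : ℝ}

theorem e1 (hf : Continuous f) (t : ℝ) :
    (∫ s in (0:ℝ)..t, (1-s) * f s) = F0 f t - F1 f t := by
  unfold F0 F1
  rw [← integral_sub (hf.intervalIntegrable _ _) ((show Continuous fun s => s * f s from continuous_id'.mul hf).intervalIntegrable _ _)]
  apply integral_congr
  intro s _
  simp; ring

theorem e2 (hf : Continuous f) (t : ℝ) :
    A f = (∫ s in (0:ℝ)..t, (1-s) * f s) + ∫ s in t..1, (1-s) * f s := by
  unfold A
  rw [integral_add_adjacent_intervals
    ((show Continuous fun s => (1 - s) * f s from (continuous_const.sub continuous_id').mul hf).intervalIntegrable _ _)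
    ((show Continuous fun s => (1 - s) * f s from (continuous_const.sub continuous_id').mul hf).intervalIntegrable _ _)]

theorem idW1 (hf : Continuous f) (t : ℝ) :
    W1 (A f) f t = t * (∫ s in t..1, (1-s) * f s) + (1-t) * (∫ s in (0:ℝ)..t, s * f s) := by
  unfold W1
  rw [e2 hf t, e1 hf t]
  unfold F1
  ring

theorem idW2 (hf : Continuous f) (t : ℝ) :
    W2 (A f) f t = (∫ s in t..1, (1-s) * f s) - ∫ s in (0:ℝ)..t, s * f s := by
  unfold W2
  rw [e2 hf t, e1 hf t]
  unfold F1
  ring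

theorem intb1 (hf : Continuous f) {K : ℝ} (hK : ∀ s, |f s| ≤ K) (h1 : t ≤ 1) :
    |∫ s in t..1, (1-s) * f s| ≤ K * (1-t)^2/2 := by
  have h := (abs_integral_le_integral_abs (f := fun s => (1-s) * f s) (μ := MeasureTheory.volume) h1)
  refine h.trans ?_
  have h2 : (∫ s in t..1, |(1-s) * f s|) ≤ ∫ s in t..1, (1-s) * K := by
    apply integral_mono_on h1
      (((continuous_const.sub continuous_id').mul hf).abs.intervalIntegrable _ _)
      (((continuous_const.sub continuous_id').mul continuous_const).intervalIntegrable _ _)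
    intro s hs
    show |(1 - s) * f s| ≤ (1 - s) * K
    rw [abs_mul, abs_of_nonneg (by linarith [hs.2] : (0:ℝ) ≤ 1 - s)]
    exact mul_le_mul_of_nonneg_left (hK s) (by linarith [hs.2])
  refine h2.trans ?_
  have : (∫ s in t..1, (1-s) * K) = ((∫ s in t..1, (1:ℝ)) - ∫ s in t..1, s) * K := by
    rw [← integral_sub (continuous_const.intervalIntegrable _ _) (continuous_id'.intervalIntegrable _ _),
      ← integral_mul_const]
  rw [this, integral_id]
  simp
  nlinarith [sq_nonneg (1-t)]

theorem intb2 (hf : Continuous f) {K : ℝ} (hK : ∀ s, |f s| ≤ K) (h0 : 0 ≤ t) :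
    |∫ s in (0:ℝ)..t, s * f s| ≤ K * t^2/2 := by
  have h := (abs_integral_le_integral_abs (f := fun s => s * f s) (μ := MeasureTheory.volume) h0)
  refine h.trans ?_
  have h2 : (∫ s in (0:ℝ)..t, |s * f s|) ≤ ∫ s in (0:ℝ)..t, s * K := by
    apply integral_mono_on h0
      ((continuous_id'.mul hf).abs.intervalIntegrable _ _)
      ((continuous_id'.mul continuous_const).intervalIntegrable _ _)
    intro s hs
    show |s * f s| ≤ s * K
    rw [abs_mul, abs_of_nonneg hs.1]
    exact mul_le_mul_of_nonneg_left (hK s) hs.1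
  refine h2.trans ?_
  rw [integral_mul_const, integral_id]
  nlinarith

theorem contW1 (hf : Continuous f) : Continuous (W1 a f) :=
  continuous_iff_continuousAt.2 fun _ => (hW1 hf).continuousAt

theorem W1_abs_le (hf : Continuous f) {K : ℝ} (hK : ∀ s, |f s| ≤ K)
    (h0 : 0 ≤ t) (h1 : t ≤ 1) : |W1 (A f) f t| ≤ K * (t*(1-t)/2) := by
  rw [idW1 hf t]
  have b1 := intb1 hf hK h1
  have b2 := intb2 hf hK h0
  calc |t * (∫ s in t..1, (1-s) * f s) + (1-t) * ∫ s in (0:ℝ)..t, s * f s|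
      ≤ |t * (∫ s in t..1, (1-s) * f s)| + |(1-t) * ∫ s in (0:ℝ)..t, s * f s| := abs_add_le _ _
    _ ≤ t * (K * (1-t)^2/2) + (1-t) * (K * t^2/2) := by
        rw [abs_mul, abs_mul, abs_of_nonneg h0, abs_of_nonneg (by linarith : (0:ℝ) ≤ 1 - t)]
        exact add_le_add (mul_le_mul_of_nonneg_left b1 h0)
          (mul_le_mul_of_nonneg_left b2 (by linarith))
    _ = K * (t*(1-t)/2) := by ring

theorem W1_nonneg (hf : Continuous f) (hp : ∀ s, 0 ≤ f s)
    (h0 : 0 ≤ t) (h1 : t ≤ 1) : 0 ≤ W1 (A f) f t := by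
  rw [idW1 hf t]
  have b1 : 0 ≤ ∫ s in t..1, (1-s) * f s :=
    integral_nonneg h1 fun s hs => mul_nonneg (by linarith [hs.2]) (hp s)
  have b2 : 0 ≤ ∫ s in (0:ℝ)..t, s * f s :=
    integral_nonneg h0 fun s hs => mul_nonneg hs.1 (hp s)
  have := mul_nonneg h0 b1
  have := mul_nonneg (by linarith : (0:ℝ) ≤ 1 - t) b2
  linarith

theorem W_eq (hf : Continuous f) (a t : ℝ) : W a f t = ∫ s in (0:ℝ)..t, W1 a f s := by
  have h := integral_eq_sub_of_hasDerivAt (f := W a f) (f' := W1 a f)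
    (fun s _ => hW hf) ((contW1 hf).intervalIntegrable 0 t)
  rw [h, W_zero, sub_zero]

theorem W_abs_le (hf : Continuous f) {K : ℝ} (hK : ∀ s, |f s| ≤ K)
    (h0 : 0 ≤ t) (h1 : t ≤ 1) : |W (A f) f t| ≤ K/12 := by
  have hKnn : 0 ≤ K := le_trans (abs_nonneg _) (hK 0)
  rw [W_eq hf]
  have h := abs_integral_le_integral_abs (f := W1 (A f) f) (μ := MeasureTheory.volume) h0
  refine h.trans ?_
  have h2 : (∫ s in (0:ℝ)..t, |W1 (A f) f s|) ≤ ∫ s in (0:ℝ)..t, (K/2 * s - K/2 * s^2) := by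
    apply integral_mono_on h0 ((contW1 hf).abs.intervalIntegrable _ _)
      (((continuous_const.mul continuous_id').sub
        (continuous_const.mul (continuous_pow 2))).intervalIntegrable _ _)
    intro s hs
    have := W1_abs_le hf hK hs.1 (hs.2.trans h1)
    calc |W1 (A f) f s| ≤ K * (s*(1-s)/2) := this
      _ = K/2 * s - K/2 * s^2 := by ring
  refine h2.trans ?_
  rw [integral_sub ((show Continuous fun s : ℝ => K/2 * s from continuous_const.mul continuous_id').intervalIntegrable _ _)
    ((show Continuous fun s : ℝ => K/2 * s^2 from continuous_const.mul (continuous_pow 2)).intervalIntegrable _ _),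
    integral_const_mul, integral_const_mul, integral_id, integral_pow]
  have : (0:ℝ) ≤ (1-t)^2 * (1 + 2*t) := mul_nonneg (sq_nonneg _) (by linarith)
  push_cast
  nlinarith

theorem W_nonneg (hf : Continuous f) (hp : ∀ s, 0 ≤ f s)
    (h0 : 0 ≤ t) (h1 : t ≤ 1) : 0 ≤ W (A f) f t := by
  rw [W_eq hf]
  exact integral_nonneg h0 fun s hs => W1_nonneg hf hp hs.1 (hs.2.trans h1)

theorem W2_abs_le (hf : Continuous f) {K : ℝ} (hK : ∀ s, |f s| ≤ K)
    (h0 : 0 ≤ t) (h1 : t ≤ 1) : |W2 (A f) f t| ≤ K/2 := by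
  rw [idW2 hf t]
  have b1 := intb1 hf hK h1
  have b2 := intb2 hf hK h0
  have hKnn : 0 ≤ K := le_trans (abs_nonneg _) (hK 0)
  refine (abs_sub _ _).trans ?_
  have h := add_le_add b1 b2
  nlinarith [mul_nonneg hKnn (mul_nonneg h0 (by linarith : (0:ℝ) ≤ 1 - t))]

theorem W1_one (hf : Continuous f) (a : ℝ) : W1 a f 1 = a - A f := by
  unfold W1 A
  rw [e1 hf 1]
  ring

theorem W1_eq (hf : Continuous f) (a t : ℝ) : W1 a f t = ∫ s in (0:ℝ)..t, W2 a f s := by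
  have hc : Continuous (W2 a f) := continuous_iff_continuousAt.2 fun _ => (hW2 hf).continuousAt
  have h := integral_eq_sub_of_hasDerivAt (f := W1 a f) (f' := W2 a f)
    (fun s _ => hW1 hf) (hc.intervalIntegrable 0 t)
  rw [h, W1_zero, sub_zero]

theorem W_sub {g : ℝ → ℝ} (hf : Continuous f) (hg : Continuous g) (t : ℝ) :
    W (A fun s => f s - g s) (fun s => f s - g s) t = W (A f) f t - W (A g) g t := by
  have hA : A (fun s => f s - g s) = A f - A g := by
    unfold A
    rw [← integral_sub ((show Continuous fun s => (1 - s) * f s from (continuous_const.sub continuous_id').mul hf).intervalIntegrable _ _)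
      ((show Continuous fun s => (1 - s) * g s from (continuous_const.sub continuous_id').mul hg).intervalIntegrable _ _)]
    apply integral_congr; intro s _; ring
  have h0 : F0 (fun s => f s - g s) t = F0 f t - F0 g t := by
    unfold F0
    rw [← integral_sub (hf.intervalIntegrable _ _) (hg.intervalIntegrable _ _)]
  have h1 : F1 (fun s => f s - g s) t = F1 f t - F1 g t := by
    unfold F1
    rw [← integral_sub ((show Continuous fun s => s * f s from continuous_id'.mul hf).intervalIntegrable _ _)
      ((show Continuous fun s => s * g s from continuous_id'.mul hg).intervalIntegrable _ _)]
    apply integral_congr; intro s _; ring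
  have h2 : F2 (fun s => f s - g s) t = F2 f t - F2 g t := by
    unfold F2
    rw [← integral_sub ((show Continuous fun s : ℝ => s^2 * f s from (continuous_pow 2).mul hf).intervalIntegrable _ _)
      ((show Continuous fun s : ℝ => s^2 * g s from (continuous_pow 2).mul hg).intervalIntegrable _ _)]
    apply integral_congr; intro s _; ring
  unfold W
  rw [hA, h0, h1, h2]
  ring

theorem unique_aux {v f : ℝ → ℝ} (hf : Continuous f)
    (hv : ContDiff ℝ 2 v)
    (hode : ∀ t ∈ Set.Ioo (0:ℝ) 1, HasDerivAt (deriv (deriv v)) (-Real.exp (v t)) t)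
    (hv0 : v 0 = 0) (hdv0 : deriv v 0 = 0) (hdv1 : deriv v 1 = 0)
    (hagree : ∀ s ∈ Set.Icc (0:ℝ) 1, f s = Real.exp (v s)) :
    ∀ t ∈ Set.Icc (0:ℝ) 1, v t = W (A f) f t := by
  have hdiff : Differentiable ℝ v := hv.differentiable two_ne_zero
  rw [show (2 : WithTop ℕ∞) = 1 + 1 from rfl] at hv
  have h1 : ContDiff ℝ 1 (deriv v) := (contDiff_succ_iff_deriv.mp hv).2.2
  have hdiff2 : Differentiable ℝ (deriv v) := h1.differentiable one_ne_zero
  have hcont2 : Continuous (deriv (deriv v)) := (contDiff_one_iff_deriv.mp h1).2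
  set av := deriv (deriv v) 0 with hav_def
  have stepA : ∀ t ∈ Set.Icc (0:ℝ) 1, deriv (deriv v) t = W2 av f t := by
    intro t ht
    have hftc : (∫ s in (0:ℝ)..t, -Real.exp (v s)) = deriv (deriv v) t - av :=
      integral_eq_sub_of_hasDeriv_right_of_le ht.1 hcont2.continuousOn
        (fun s hs => (hode s ⟨hs.1, lt_of_lt_of_le hs.2 ht.2⟩).hasDerivWithinAt)
        ((Real.continuous_exp.comp hdiff.continuous).neg.intervalIntegrable _ _)
    have hcong : (∫ s in (0:ℝ)..t, f s) = ∫ s in (0:ℝ)..t, Real.exp (v s) := by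
      apply integral_congr
      intro s hs
      rw [uIcc_of_le ht.1] at hs
      exact hagree s ⟨hs.1, hs.2.trans ht.2⟩
    have hneg : (∫ s in (0:ℝ)..t, -Real.exp (v s)) = -∫ s in (0:ℝ)..t, Real.exp (v s) :=
      integral_neg
    unfold W2 F0
    rw [hcong]
    rw [hneg] at hftc
    linarith
  have stepB : ∀ t ∈ Set.Icc (0:ℝ) 1, deriv v t = W1 av f t := by
    intro t ht
    have hftc : (∫ s in (0:ℝ)..t, deriv (deriv v) s) = deriv v t - deriv v 0 :=
      integral_eq_sub_of_hasDerivAt (fun s _ => (hdiff2 s).hasDerivAt)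
        (hcont2.intervalIntegrable _ _)
    rw [W1_eq hf]
    have hcong : (∫ s in (0:ℝ)..t, W2 av f s) = ∫ s in (0:ℝ)..t, deriv (deriv v) s := by
      apply integral_congr
      intro s hs
      rw [uIcc_of_le ht.1] at hs
      exact (stepA s ⟨hs.1, hs.2.trans ht.2⟩).symm
    rw [hcong, hftc, hdv0]
    ring
  have stepC : ∀ t ∈ Set.Icc (0:ℝ) 1, v t = W av f t := by
    intro t ht
    have hftc : (∫ s in (0:ℝ)..t, deriv v s) = v t - v 0 :=
      integral_eq_sub_of_hasDerivAt (fun s _ => (hdiff s).hasDerivAt)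
        (h1.continuous.intervalIntegrable _ _)
    rw [W_eq hf]
    have hcong : (∫ s in (0:ℝ)..t, W1 av f s) = ∫ s in (0:ℝ)..t, deriv v s := by
      apply integral_congr
      intro s hs
      rw [uIcc_of_le ht.1] at hs
      exact (stepB s ⟨hs.1, hs.2.trans ht.2⟩).symm
    rw [hcong, hftc, hv0]
    ring
  have hW1one : W1 av f 1 = 0 := by
    rw [← stepB 1 ⟨zero_le_one, le_rfl⟩, hdv1]
  have hav : av = A f := by
    have h := W1_one hf av
    rw [hW1one] at h
    linarith
  intro t ht
  rw [stepC t ht, hav]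

theorem exp_c_le : Real.exp ((1.1:ℝ)/12) ≤ 1.1 := by
  have h := Real.exp_bound' (x := (1.1:ℝ)/12) (by norm_num) (by norm_num) (n := 3) (by norm_num)
  refine h.trans ?_
  norm_num [Finset.sum_range_succ, Nat.factorial]

theorem explip {x y : ℝ} (hx : x ≤ (1.1:ℝ)/12) (hy : y ≤ (1.1:ℝ)/12) :
    |Real.exp x - Real.exp y| ≤ 1.1 * |x - y| := by
  have key : ∀ a b : ℝ, a ≤ b → b ≤ (1.1:ℝ)/12 →
      Real.exp b - Real.exp a ≤ 1.1 * (b - a) := by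
    intro a b hab hb
    have h1 : Real.exp b ≤ 1.1 := (Real.exp_le_exp.2 hb).trans exp_c_le
    have h2 := Real.add_one_le_exp (a - b)
    have h3 : Real.exp (a - b) * Real.exp b = Real.exp a := by
      rw [← Real.exp_add]; ring_nf
    nlinarith [Real.exp_pos b]
  rcases le_total x y with h | h
  · rw [abs_of_nonpos (by simp [Real.exp_le_exp.2 h]), abs_of_nonpos (by linarith)]
    have := key x y h hy
    linarith
  · rw [abs_of_nonneg (by simp [Real.exp_le_exp.2 h]), abs_of_nonneg (by linarith)]
    have := key y x h hx
    linarith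

def XS : Set C(Set.Icc (0:ℝ) 1, ℝ) := {g | ∀ x, g x ∈ Set.Icc (0:ℝ) (1.1/12)}

theorem XS_closed : IsClosed XS := by
  have : XS = ⋂ x, (fun g : C(Set.Icc (0:ℝ) 1, ℝ) => g x) ⁻¹' Set.Icc (0:ℝ) (1.1/12) := by
    ext g; simp [XS, Set.mem_iInter]
  rw [this]
  exact isClosed_iInter fun x =>
    IsClosed.preimage (continuous_eval_const x) isClosed_Icc

instance : CompleteSpace XS := XS_closed.completeSpace_coe

instance : Nonempty XS := ⟨⟨ContinuousMap.const _ 0, fun x => by simp; norm_num⟩⟩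

noncomputable def fX (g : C(Set.Icc (0:ℝ) 1, ℝ)) : ℝ → ℝ :=
  fun s => Real.exp (g (Set.projIcc 0 1 (by norm_num) s))

theorem fX_cont (g : C(Set.Icc (0:ℝ) 1, ℝ)) : Continuous (fX g) :=
  Real.continuous_exp.comp (g.continuous.comp continuous_projIcc)

theorem fX_pos (g : C(Set.Icc (0:ℝ) 1, ℝ)) : ∀ s, 0 ≤ fX g s :=
  fun s => (Real.exp_pos _).le

theorem fX_le {g : C(Set.Icc (0:ℝ) 1, ℝ)} (hg : g ∈ XS) : ∀ s, |fX g s| ≤ 1.1 := by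
  intro s
  rw [abs_of_nonneg (fX_pos g s)]
  exact (Real.exp_le_exp.2 (hg _).2).trans exp_c_le

noncomputable def Tfun (g : C(Set.Icc (0:ℝ) 1, ℝ)) : ℝ → ℝ := W (A (fX g)) (fX g)

noncomputable def TX : XS → XS := fun g =>
  ⟨⟨fun x => Tfun g.1 x.1, ((contDiffW (fX_cont g.1)).continuous).comp continuous_subtype_val⟩,
   fun x => ⟨W_nonneg (fX_cont g.1) (fX_pos g.1) x.2.1 x.2.2,
     by
      have h := (abs_le.1 (W_abs_le (fX_cont g.1) (fX_le g.2) x.2.1 x.2.2)).2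
      show Tfun g.1 x.1 ≤ 1.1/12
      unfold Tfun
      linarith⟩⟩

theorem TX_contracting : ContractingWith (11/120 : ℝ≥0) TX := by
  constructor
  · rw [← NNReal.coe_lt_coe]
    norm_num
  apply LipschitzWith.of_dist_le_mul
  intro u v
  have hq : ((11/120 : ℝ≥0) : ℝ) = 11/120 := by norm_num
  have hC : (0:ℝ) ≤ ((11/120 : ℝ≥0) : ℝ) * dist u v :=
    mul_nonneg (by norm_num) dist_nonneg
  rw [Subtype.dist_eq, ContinuousMap.dist_le hC]
  intro x
  rw [Real.dist_eq]
  have hd : ∀ s, |fX u.1 s - fX v.1 s| ≤ (1.1 * dist u v) := by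
    intro s
    have h1 := explip (u.2 (Set.projIcc 0 1 (by norm_num) s)).2
      (v.2 (Set.projIcc 0 1 (by norm_num) s)).2
    refine h1.trans ?_
    have h2 : |u.1 (Set.projIcc 0 1 (by norm_num) s) - v.1 (Set.projIcc 0 1 (by norm_num) s)|
        ≤ dist u v := by
      rw [← Real.dist_eq, Subtype.dist_eq]
      exact ContinuousMap.dist_apply_le_dist _
    nlinarith [abs_nonneg (u.1 (Set.projIcc 0 1 (by norm_num) s) - v.1 (Set.projIcc 0 1 (by norm_num) s))]
  have hsub : (TX u).1 x - (TX v).1 x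
      = W (A fun s => fX u.1 s - fX v.1 s) (fun s => fX u.1 s - fX v.1 s) x.1 := by
    show Tfun u.1 x.1 - Tfun v.1 x.1 = _
    unfold Tfun
    rw [W_sub (fX_cont u.1) (fX_cont v.1)]
  show |(TX u).1 x - (TX v).1 x| ≤ _
  rw [hsub]
  have hb := W_abs_le (show Continuous fun s => fX u.1 s - fX v.1 s from (fX_cont u.1).sub (fX_cont v.1)) hd x.2.1 x.2.2
  rw [hq]
  linarith

theorem example_7 :
    ∃ u : ℝ → ℝ, (IsSolution u ∧ InBounds u ∧
      (∀ t ∈ Set.Icc (0:ℝ) 1, 0 ≤ u t) ∧ MonotoneOn u (Set.Icc (0:ℝ) 1)) ∧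
      ∀ v : ℝ → ℝ, IsSolution v ∧ InBounds v → ∀ t ∈ Set.Icc (0:ℝ) 1, v t = u t := by
  set g0 := ContractingWith.fixedPoint TX TX_contracting with hg0_def
  set u : ℝ → ℝ := Tfun g0.1 with hu_def
  have hfC : Continuous (fX g0.1) := fX_cont g0.1
  have hfix : TX g0 = g0 := TX_contracting.fixedPoint_isFixedPt
  have hufix : ∀ x : Set.Icc (0:ℝ) 1, u x.1 = g0.1 x := by
    intro x
    have := ContinuousMap.congr_fun (congrArg Subtype.val hfix) x
    exact this
  have hfu : ∀ t ∈ Set.Icc (0:ℝ) 1, fX g0.1 t = Real.exp (u t) := by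
    intro t ht
    show Real.exp (g0.1 (Set.projIcc 0 1 (by norm_num) t)) = _
    rw [Set.projIcc_of_mem _ ht, hufix ⟨t, ht⟩]
  have huW : u = W (A (fX g0.1)) (fX g0.1) := rfl
  have hderiv1 : deriv u = W1 (A (fX g0.1)) (fX g0.1) := by rw [huW, derivW hfC]
  have hderiv2 : deriv (deriv u) = W2 (A (fX g0.1)) (fX g0.1) := by
    rw [hderiv1, derivW1 hfC]
  refine ⟨u, ⟨⟨?_, ?_, ?_, ?_, ?_⟩, ?_, ?_, ?_⟩, ?_⟩
  · rw [huW]; exact contDiffW hfC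
  · intro t ht
    have h := hW2 (f := fX g0.1) (a := A (fX g0.1)) (t := t) hfC
    rw [hderiv2, ← hfu t ⟨ht.1.le, ht.2.le⟩]
    exact h
  · rw [huW]; exact W_zero
  · rw [hderiv1]; exact W1_zero
  · rw [hderiv1, W1_one hfC, sub_self]
  · -- InBounds
    intro t ht
    refine ⟨⟨?_, ?_⟩, ⟨?_, ?_⟩, ?_⟩
    · exact W_nonneg hfC (fX_pos g0.1) ht.1 ht.2
    · have h := (abs_le.1 (W_abs_le hfC (fX_le g0.2) ht.1 ht.2)).2
      rw [huW]; linarith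
    · rw [hderiv1]; exact W1_nonneg hfC (fX_pos g0.1) ht.1 ht.2
    · rw [hderiv1]
      have h := (abs_le.1 (W1_abs_le hfC (fX_le g0.2) ht.1 ht.2)).2
      nlinarith [sq_nonneg (1 - 2*t)]
    · rw [hderiv2]
      have h := W2_abs_le hfC (fX_le g0.2) ht.1 ht.2
      linarith
  · intro t ht
    exact W_nonneg hfC (fX_pos g0.1) ht.1 ht.2
  · -- MonotoneOn
    apply monotoneOn_of_deriv_nonneg (convex_Icc 0 1)
      ((contDiffW hfC).continuous.continuousOn)
    · intro t _
      exact ((hW hfC).differentiableAt).differentiableWithinAt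
    · intro t ht
      rw [interior_Icc] at ht
      rw [derivW hfC]
      exact W1_nonneg hfC (fX_pos g0.1) ht.1.le ht.2.le
  · -- uniqueness
    rintro v ⟨hv, hb⟩
    set gv : XS := ⟨⟨fun x => v x.1, hv.1.continuous.comp continuous_subtype_val⟩,
      fun x => ⟨(hb x.1 x.2).1.1, (hb x.1 x.2).1.2⟩⟩ with hgv_def
    have hagree : ∀ s ∈ Set.Icc (0:ℝ) 1, fX gv.1 s = Real.exp (v s) := by
      intro s hs
      show Real.exp (gv.1 (Set.projIcc 0 1 (by norm_num) s)) = _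
      rw [Set.projIcc_of_mem _ hs]
      rfl
    have hWv : ∀ t ∈ Set.Icc (0:ℝ) 1, v t = W (A (fX gv.1)) (fX gv.1) t :=
      unique_aux (fX_cont gv.1) hv.1 hv.2.1 hv.2.2.1 hv.2.2.2.1 hv.2.2.2.2 hagree
    have hfixv : TX gv = gv := by
      apply Subtype.ext
      apply ContinuousMap.ext
      intro x
      show Tfun gv.1 x.1 = v x.1
      exact (hWv x.1 x.2).symm
    have hgveq : gv = g0 := TX_contracting.fixedPoint_unique hfixv
    intro t ht
    have h1 : v t = gv.1 ⟨t, ht⟩ := rfl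
    rw [h1, hgveq, ← hufix ⟨t, ht⟩]
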